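/- Let κ > 0 and define, on the open set Ω = {(c₁, c₂) : 3κ² < c₂ < c₁ < 9κ²}, the functions F₁(c₁,c₂) = (8/κ)·[g(c₁) + g(c₂)] with g(c) = ln((√(c−κ²) + √(c−3κ²))/(√2·κ)) − √((c−3κ²)/(c−κ²)); F₂(c₁,c₂) = (4/κ³)·[h(c₁) + h(c₂)] with h(c) = ln((√(c−κ²) + √(c−3κ²))/(√2·κ)) − ((c+3κ²)/(3(c−κ²)))·√((c−3κ²)/(c−κ²)); λ₁(c₁,c₂) = −1/(16κ⁴) + (1/(2κ²))·(1/(c₁−κ²) + 1/(c₂−κ²)) + 2/((c₁−κ²)(c₂−κ²)); and λ₂(c₁,c₂) = −(1/(4κ²) + 1/(c₁−κ²) + 1/(c₂−κ²)). Then at every point of Ω the 2×2 Jacobian matrix J_λ of (λ₁, λ₂) with respect to (c₁, c₂) is invertible, and the matrix M = J_F · J_λ⁻¹, where J_F is the Jacobian matrix of (F₁, F₂) with respect to (c₁, c₂), satisfies det M = −(16/κ²)·√((c₁−κ²)(c₂−κ²)(c₁−3κ²)(c₂−3κ²)) < 0; consequently M has exactly one strictly positive and one strictly negative real eigenvalue.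 -/

import Mathlib

open Matrix


open Matrix

lemma hderiv_one_div (b c : ℝ) (h : c - b ≠ 0) :
    HasDerivAt (fun x : ℝ => 1 / (x - b)) (-(1 / (c - b) ^ 2)) c := by
  have hid : HasDerivAt (fun x : ℝ => x - b) 1 c := by simpa using (hasDerivAt_id c).sub_const b
  have := (hasDerivAt_const c (1 : ℝ)).div hid h
  refine this.congr_deriv ?_
  field_simp
  ring

lemma hderiv_div_right (k m b c : ℝ) (h : c - b ≠ 0) (hm : m ≠ 0) :
    HasDerivAt (fun x : ℝ => k / ((x - b) * m)) (-(k / ((c - b) ^ 2 * m))) c := by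
  have hid : HasDerivAt (fun x : ℝ => (x - b) * m) m c := by
    simpa using ((hasDerivAt_id c).sub_const b).mul_const m
  have := (hasDerivAt_const c k).div hid (mul_ne_zero h hm)
  refine this.congr_deriv ?_
  field_simp
  ring

lemma hderiv_div_left (k m b c : ℝ) (h : c - b ≠ 0) (hm : m ≠ 0) :
    HasDerivAt (fun x : ℝ => k / (m * (x - b))) (-(k / (m * (c - b) ^ 2))) c := by
  have hid : HasDerivAt (fun x : ℝ => m * (x - b)) m c := by
    simpa using ((hasDerivAt_id c).sub_const b).const_mul m
  have := (hasDerivAt_const c k).div hid (mul_ne_zero hm h)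
  refine this.congr_deriv ?_
  field_simp
  ring

lemma G_hasDeriv (κ : ℝ) (hκ : 0 < κ) (c : ℝ) (hc : 3 * κ ^ 2 < c) :
    HasDerivAt (fun x => Real.log ((Real.sqrt (x - κ ^ 2) + Real.sqrt (x - 3 * κ ^ 2))
        / (Real.sqrt 2 * κ)) - Real.sqrt ((x - 3 * κ ^ 2) / (x - κ ^ 2)))
      (Real.sqrt (c - 3 * κ ^ 2) / (2 * (c - κ ^ 2) * Real.sqrt (c - κ ^ 2))) c := by
  have hk2 : (0:ℝ) < κ ^ 2 := by positivity
  have ha : 0 < c - κ ^ 2 := by nlinarith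
  have hb : 0 < c - 3 * κ ^ 2 := by nlinarith
  have hsa := Real.sqrt_pos.mpr ha
  have hsb := Real.sqrt_pos.mpr hb
  have hsa2 : Real.sqrt (c - κ ^ 2) ^ 2 = c - κ ^ 2 := Real.sq_sqrt ha.le
  have hsb2 : Real.sqrt (c - 3 * κ ^ 2) ^ 2 = c - 3 * κ ^ 2 := Real.sq_sqrt hb.le
  have hid1 : HasDerivAt (fun x : ℝ => x - κ ^ 2) 1 c := by
    simpa using (hasDerivAt_id c).sub_const (κ ^ 2)
  have hid2 : HasDerivAt (fun x : ℝ => x - 3 * κ ^ 2) 1 c := by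
    simpa using (hasDerivAt_id c).sub_const (3 * κ ^ 2)
  have d1 : HasDerivAt (fun x : ℝ => Real.sqrt (x - κ ^ 2))
      (1 / (2 * Real.sqrt (c - κ ^ 2))) c := by
    simpa using hid1.sqrt (by simpa using ha.ne')
  have d2 : HasDerivAt (fun x : ℝ => Real.sqrt (x - 3 * κ ^ 2))
      (1 / (2 * Real.sqrt (c - 3 * κ ^ 2))) c := by
    simpa using hid2.sqrt (by simpa using hb.ne')
  have hden : (Real.sqrt (c - κ ^ 2) + Real.sqrt (c - 3 * κ ^ 2)) / (Real.sqrt 2 * κ) ≠ 0 := by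
    positivity
  have dlog := (((d1.add d2).div_const (Real.sqrt 2 * κ)).log (by simpa using hden))
  have dq : HasDerivAt (fun x : ℝ => (x - 3 * κ ^ 2) / (x - κ ^ 2))
      ((2 * κ ^ 2) / (c - κ ^ 2) ^ 2) c := by
    have := hid2.div hid1 ha.ne'
    refine this.congr_deriv ?_
    field_simp
    ring
  have dsq := dq.sqrt (by positivity)
  have dG := dlog.sub dsq
  refine dG.congr_deriv ?_
  simp only [Pi.add_apply]
  rw [Real.sqrt_div hb.le]
  set sa := Real.sqrt (c - κ ^ 2) with hsa_def
  set sb := Real.sqrt (c - 3 * κ ^ 2) with hsb_def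
  rw [show 2 * κ ^ 2 = sa ^ 2 - sb ^ 2 by linarith, ← hsa2]
  have h2κ : Real.sqrt 2 * κ ≠ 0 := by positivity
  have hsum : (0:ℝ) < sa + sb := by linarith
  field_simp [hsa.ne', hsb.ne', hsum.ne']
  ring
lemma H_hasDeriv (κ : ℝ) (hκ : 0 < κ) (c : ℝ) (hc : 3 * κ ^ 2 < c) :
    HasDerivAt (fun x => Real.log ((Real.sqrt (x - κ ^ 2) + Real.sqrt (x - 3 * κ ^ 2))
        / (Real.sqrt 2 * κ))
      - ((x + 3 * κ ^ 2) / (3 * (x - κ ^ 2))) * Real.sqrt ((x - 3 * κ ^ 2) / (x - κ ^ 2)))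
      ((c + 3 * κ ^ 2) * Real.sqrt (c - 3 * κ ^ 2)
        / (2 * (c - κ ^ 2) ^ 2 * Real.sqrt (c - κ ^ 2))) c := by
  have hk2 : (0:ℝ) < κ ^ 2 := by positivity
  have ha : 0 < c - κ ^ 2 := by nlinarith
  have hb : 0 < c - 3 * κ ^ 2 := by nlinarith
  have hsa := Real.sqrt_pos.mpr ha
  have hsb := Real.sqrt_pos.mpr hb
  have hsa2 : Real.sqrt (c - κ ^ 2) ^ 2 = c - κ ^ 2 := Real.sq_sqrt ha.le
  have hsb2 : Real.sqrt (c - 3 * κ ^ 2) ^ 2 = c - 3 * κ ^ 2 := Real.sq_sqrt hb.le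
  have hid1 : HasDerivAt (fun x : ℝ => x - κ ^ 2) 1 c := by
    simpa using (hasDerivAt_id c).sub_const (κ ^ 2)
  have hid2 : HasDerivAt (fun x : ℝ => x - 3 * κ ^ 2) 1 c := by
    simpa using (hasDerivAt_id c).sub_const (3 * κ ^ 2)
  have d1 : HasDerivAt (fun x : ℝ => Real.sqrt (x - κ ^ 2))
      (1 / (2 * Real.sqrt (c - κ ^ 2))) c := by
    simpa using hid1.sqrt (by simpa using ha.ne')
  have d2 : HasDerivAt (fun x : ℝ => Real.sqrt (x - 3 * κ ^ 2))
      (1 / (2 * Real.sqrt (c - 3 * κ ^ 2))) c := by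
    simpa using hid2.sqrt (by simpa using hb.ne')
  have hden : (Real.sqrt (c - κ ^ 2) + Real.sqrt (c - 3 * κ ^ 2)) / (Real.sqrt 2 * κ) ≠ 0 := by
    positivity
  have dlog := (((d1.add d2).div_const (Real.sqrt 2 * κ)).log (by simpa using hden))
  have dq : HasDerivAt (fun x : ℝ => (x - 3 * κ ^ 2) / (x - κ ^ 2))
      ((2 * κ ^ 2) / (c - κ ^ 2) ^ 2) c := by
    have := hid2.div hid1 ha.ne'
    refine this.congr_deriv ?_
    field_simp
    ring
  have dsq := dq.sqrt (by positivity)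
  have du : HasDerivAt (fun x : ℝ => (x + 3 * κ ^ 2) / (3 * (x - κ ^ 2)))
      ((1 * (3 * (c - κ ^ 2)) - (c + 3 * κ ^ 2) * 3) / (3 * (c - κ ^ 2)) ^ 2) c := by
    have hnum : HasDerivAt (fun x : ℝ => x + 3 * κ ^ 2) 1 c := by
      simpa using (hasDerivAt_id c).add_const (3 * κ ^ 2)
    exact hnum.div (by simpa using hid1.const_mul 3) (by positivity)
  have dG := dlog.sub (du.mul dsq)
  refine dG.congr_deriv ?_
  simp only [Pi.add_apply]
  rw [Real.sqrt_div hb.le]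
  set sa := Real.sqrt (c - κ ^ 2) with hsa_def
  set sb := Real.sqrt (c - 3 * κ ^ 2) with hsb_def
  rw [show c + 3 * κ ^ 2 = 3 * sa ^ 2 - 2 * sb ^ 2 by linarith,
    show 2 * κ ^ 2 = sa ^ 2 - sb ^ 2 by linarith, ← hsa2]
  have h2κ : Real.sqrt 2 * κ ≠ 0 := by positivity
  have hsum : (0:ℝ) < sa + sb := by linarith
  field_simp [hsa.ne', hsb.ne', hsum.ne']
  ring

lemma eig_of_det_neg (M : Matrix (Fin 2) (Fin 2) ℝ) (hd : M.det < 0) :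
    ∃ e₁ e₂ : ℝ, e₁ < 0 ∧ 0 < e₂ ∧
      ∀ e : ℝ, Module.End.HasEigenvalue (Matrix.toLin' M) e ↔ (e = e₁ ∨ e = e₂) := by
  set t := M 0 0 + M 1 1 with ht
  have hdet2 : M.det = M 0 0 * M 1 1 - M 0 1 * M 1 0 := Matrix.det_fin_two M
  set s := Real.sqrt (t ^ 2 - 4 * M.det) with hs_def
  have hs0 : 0 ≤ s := Real.sqrt_nonneg _
  have hs : s ^ 2 = t ^ 2 - 4 * M.det := Real.sq_sqrt (by nlinarith)
  have hst : |t| < s := by nlinarith [sq_abs t, abs_nonneg t]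
  have htle : t ≤ |t| := le_abs_self t
  have htge : -t ≤ |t| := neg_le_abs t
  have key : ∀ e : ℝ, Module.End.HasEigenvalue (Matrix.toLin' M) e ↔
      e * e - t * e + M.det = 0 := by
    intro e
    rw [Module.End.hasEigenvalue_iff_mem_spectrum]
    have heq : Matrix.toLin' M = Matrix.toLinAlgEquiv' M := rfl
    rw [heq, AlgEquiv.spectrum_eq, spectrum.mem_iff, Matrix.isUnit_iff_isUnit_det,
      isUnit_iff_ne_zero, not_ne_iff]
    have hdd : ((algebraMap ℝ (Matrix (Fin 2) (Fin 2) ℝ)) e - M).det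
        = e * e - t * e + M.det := by
      rw [Matrix.det_fin_two, hdet2, ht]
      simp [Matrix.algebraMap_matrix_apply, Matrix.sub_apply]
      ring
    rw [hdd]
  refine ⟨(t - s) / 2, (t + s) / 2, by linarith, by linarith, fun e => ?_⟩
  rw [key e]
  constructor
  · intro h0
    have hfac : (e - (t - s) / 2) * (e - (t + s) / 2) = 0 := by
      linear_combination h0 - hs / 4
    rcases mul_eq_zero.mp hfac with h | h
    · exact Or.inl (by linarith)
    · exact Or.inr (by linarith)
  · rintro (rfl | rfl)
    · linear_combination hs / 4
    · linear_combination hs / 4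


set_option maxHeartbeats 1000000 in
/-- the Maddocks–Sachs Hessian matrix `M = J_F · J_λ⁻¹` of the
2-soliton of the mCH equation has determinant
`−(16/κ²)·√((c₁−κ²)(c₂−κ²)(c₁−3κ²)(c₂−3κ²)) < 0`, hence exactly one strictly
positive and one strictly negative real eigenvalue; moreover `J_λ` is
invertible on `Ω = {3κ² < c₂ < c₁ < 9κ²}`. -/
theorem hessian_matrix_M (κ : ℝ) (hκ : 0 < κ)
    (F₁ F₂ l₁ l₂ : ℝ → ℝ → ℝ) (g h : ℝ → ℝ)
    (hg : ∀ c, g c = Real.log ((Real.sqrt (c - κ ^ 2) + Real.sqrt (c - 3 * κ ^ 2))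
        / (Real.sqrt 2 * κ)) - Real.sqrt ((c - 3 * κ ^ 2) / (c - κ ^ 2)))
    (hh : ∀ c, h c = Real.log ((Real.sqrt (c - κ ^ 2) + Real.sqrt (c - 3 * κ ^ 2))
        / (Real.sqrt 2 * κ))
      - ((c + 3 * κ ^ 2) / (3 * (c - κ ^ 2))) * Real.sqrt ((c - 3 * κ ^ 2) / (c - κ ^ 2)))
    (hF₁ : ∀ c₁ c₂, F₁ c₁ c₂ = (8 / κ) * (g c₁ + g c₂))
    (hF₂ : ∀ c₁ c₂, F₂ c₁ c₂ = (4 / κ ^ 3) * (h c₁ + h c₂))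
    (hl₁ : ∀ c₁ c₂, l₁ c₁ c₂ = -(1 / (16 * κ ^ 4))
      + (1 / (2 * κ ^ 2)) * (1 / (c₁ - κ ^ 2) + 1 / (c₂ - κ ^ 2))
      + 2 / ((c₁ - κ ^ 2) * (c₂ - κ ^ 2)))
    (hl₂ : ∀ c₁ c₂, l₂ c₁ c₂ = -(1 / (4 * κ ^ 2) + 1 / (c₁ - κ ^ 2) + 1 / (c₂ - κ ^ 2))) :
    ∀ c₁ c₂ : ℝ, 3 * κ ^ 2 < c₂ → c₂ < c₁ → c₁ < 9 * κ ^ 2 →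
      let Jlam : Matrix (Fin 2) (Fin 2) ℝ :=
        !![deriv (fun c => l₁ c c₂) c₁, deriv (fun c => l₁ c₁ c) c₂;
           deriv (fun c => l₂ c c₂) c₁, deriv (fun c => l₂ c₁ c) c₂]
      let JF : Matrix (Fin 2) (Fin 2) ℝ :=
        !![deriv (fun c => F₁ c c₂) c₁, deriv (fun c => F₁ c₁ c) c₂;
           deriv (fun c => F₂ c c₂) c₁, deriv (fun c => F₂ c₁ c) c₂]
      let M : Matrix (Fin 2) (Fin 2) ℝ := JF * Jlam⁻¹
      IsUnit Jlam.det
      ∧ M.det = -(16 / κ ^ 2)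
          * Real.sqrt ((c₁ - κ ^ 2) * (c₂ - κ ^ 2) * (c₁ - 3 * κ ^ 2) * (c₂ - 3 * κ ^ 2))
      ∧ M.det < 0
      ∧ ∃ e₁ e₂ : ℝ, e₁ < 0 ∧ 0 < e₂ ∧
          ∀ e : ℝ, Module.End.HasEigenvalue (Matrix.toLin' M) e ↔ (e = e₁ ∨ e = e₂) := by
  intro c₁ c₂ hc2 h21 h19
  intro Jlam JF M
  have hk2 : (0:ℝ) < κ ^ 2 := by positivity
  have hc1 : 3 * κ ^ 2 < c₁ := lt_trans hc2 h21
  have ha1 : 0 < c₁ - κ ^ 2 := by nlinarith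
  have ha2 : 0 < c₂ - κ ^ 2 := by nlinarith
  have hb1 : 0 < c₁ - 3 * κ ^ 2 := by nlinarith
  have hb2 : 0 < c₂ - 3 * κ ^ 2 := by nlinarith
  -- λ₁ partial derivatives
  have hL11 : deriv (fun c => l₁ c c₂) c₁
      = -(1 / (2 * κ ^ 2 * (c₁ - κ ^ 2) ^ 2)) - 2 / ((c₁ - κ ^ 2) ^ 2 * (c₂ - κ ^ 2)) := by
    have e : (fun c => l₁ c c₂) = fun c => -(1 / (16 * κ ^ 4))
        + (1 / (2 * κ ^ 2)) * (1 / (c - κ ^ 2) + 1 / (c₂ - κ ^ 2))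
        + 2 / ((c - κ ^ 2) * (c₂ - κ ^ 2)) := funext fun c => hl₁ c c₂
    rw [e]
    have H := ((((hderiv_one_div (κ ^ 2) c₁ ha1.ne').add_const
        (1 / (c₂ - κ ^ 2))).const_mul (1 / (2 * κ ^ 2))).const_add
        (-(1 / (16 * κ ^ 4)))).add
      (hderiv_div_right 2 (c₂ - κ ^ 2) (κ ^ 2) c₁ ha1.ne' ha2.ne')
    refine H.deriv.trans ?_
    field_simp
    ring
  have hL12 : deriv (fun c => l₁ c₁ c) c₂
      = -(1 / (2 * κ ^ 2 * (c₂ - κ ^ 2) ^ 2)) - 2 / ((c₁ - κ ^ 2) * (c₂ - κ ^ 2) ^ 2) := by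
    have e : (fun c => l₁ c₁ c) = fun c => -(1 / (16 * κ ^ 4))
        + (1 / (2 * κ ^ 2)) * (1 / (c₁ - κ ^ 2) + 1 / (c - κ ^ 2))
        + 2 / ((c₁ - κ ^ 2) * (c - κ ^ 2)) := funext fun c => hl₁ c₁ c
    rw [e]
    have H := ((((hderiv_one_div (κ ^ 2) c₂ ha2.ne').const_add
        (1 / (c₁ - κ ^ 2))).const_mul (1 / (2 * κ ^ 2))).const_add
        (-(1 / (16 * κ ^ 4)))).add
      (hderiv_div_left 2 (c₁ - κ ^ 2) (κ ^ 2) c₂ ha2.ne' ha1.ne')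
    refine H.deriv.trans ?_
    field_simp
    ring
  have hL21 : deriv (fun c => l₂ c c₂) c₁ = 1 / (c₁ - κ ^ 2) ^ 2 := by
    have e : (fun c => l₂ c c₂) = fun c => -(1 / (4 * κ ^ 2) + 1 / (c - κ ^ 2)
        + 1 / (c₂ - κ ^ 2)) := funext fun c => hl₂ c c₂
    rw [e]
    have H := (((hasDerivAt_const c₁ (1 / (4 * κ ^ 2))).add
        (hderiv_one_div (κ ^ 2) c₁ ha1.ne')).add_const (1 / (c₂ - κ ^ 2))).neg
    exact H.deriv.trans (by ring)
  have hL22 : deriv (fun c => l₂ c₁ c) c₂ = 1 / (c₂ - κ ^ 2) ^ 2 := by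
    have e : (fun c => l₂ c₁ c) = fun c => -(1 / (4 * κ ^ 2) + 1 / (c₁ - κ ^ 2)
        + 1 / (c - κ ^ 2)) := funext fun c => hl₂ c₁ c
    rw [e]
    have H := ((hasDerivAt_const c₂ (1 / (4 * κ ^ 2) + 1 / (c₁ - κ ^ 2))).add
        (hderiv_one_div (κ ^ 2) c₂ ha2.ne')).neg
    exact H.deriv.trans (by ring)
  -- F partial derivatives
  have hJ11 : deriv (fun c => F₁ c c₂) c₁
      = (8 / κ) * (Real.sqrt (c₁ - 3 * κ ^ 2) / (2 * (c₁ - κ ^ 2) * Real.sqrt (c₁ - κ ^ 2))) := by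
    have e : (fun c => F₁ c c₂) = fun c => (8 / κ)
        * ((Real.log ((Real.sqrt (c - κ ^ 2) + Real.sqrt (c - 3 * κ ^ 2)) / (Real.sqrt 2 * κ))
          - Real.sqrt ((c - 3 * κ ^ 2) / (c - κ ^ 2))) + g c₂) := by
      funext x; rw [hF₁, hg x]
    rw [e]
    exact (((G_hasDeriv κ hκ c₁ hc1).add_const (g c₂)).const_mul (8 / κ)).deriv
  have hJ12 : deriv (fun c => F₁ c₁ c) c₂
      = (8 / κ) * (Real.sqrt (c₂ - 3 * κ ^ 2) / (2 * (c₂ - κ ^ 2) * Real.sqrt (c₂ - κ ^ 2))) := by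
    have e : (fun c => F₁ c₁ c) = fun c => (8 / κ)
        * (g c₁ + (Real.log ((Real.sqrt (c - κ ^ 2) + Real.sqrt (c - 3 * κ ^ 2)) / (Real.sqrt 2 * κ))
          - Real.sqrt ((c - 3 * κ ^ 2) / (c - κ ^ 2)))) := by
      funext x; rw [hF₁, hg x]
    rw [e]
    exact (((G_hasDeriv κ hκ c₂ hc2).const_add (g c₁)).const_mul (8 / κ)).deriv
  have hJ21 : deriv (fun c => F₂ c c₂) c₁
      = (4 / κ ^ 3) * ((c₁ + 3 * κ ^ 2) * Real.sqrt (c₁ - 3 * κ ^ 2)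
          / (2 * (c₁ - κ ^ 2) ^ 2 * Real.sqrt (c₁ - κ ^ 2))) := by
    have e : (fun c => F₂ c c₂) = fun c => (4 / κ ^ 3)
        * ((Real.log ((Real.sqrt (c - κ ^ 2) + Real.sqrt (c - 3 * κ ^ 2)) / (Real.sqrt 2 * κ))
          - ((c + 3 * κ ^ 2) / (3 * (c - κ ^ 2))) * Real.sqrt ((c - 3 * κ ^ 2) / (c - κ ^ 2)))
          + h c₂) := by
      funext x; rw [hF₂, hh x]
    rw [e]
    exact (((H_hasDeriv κ hκ c₁ hc1).add_const (h c₂)).const_mul (4 / κ ^ 3)).deriv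
  have hJ22 : deriv (fun c => F₂ c₁ c) c₂
      = (4 / κ ^ 3) * ((c₂ + 3 * κ ^ 2) * Real.sqrt (c₂ - 3 * κ ^ 2)
          / (2 * (c₂ - κ ^ 2) ^ 2 * Real.sqrt (c₂ - κ ^ 2))) := by
    have e : (fun c => F₂ c₁ c) = fun c => (4 / κ ^ 3)
        * (h c₁ + (Real.log ((Real.sqrt (c - κ ^ 2) + Real.sqrt (c - 3 * κ ^ 2)) / (Real.sqrt 2 * κ))
          - ((c + 3 * κ ^ 2) / (3 * (c - κ ^ 2))) * Real.sqrt ((c - 3 * κ ^ 2) / (c - κ ^ 2)))) := by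
      funext x; rw [hF₂, hh x]
    rw [e]
    exact (((H_hasDeriv κ hκ c₂ hc2).const_add (h c₁)).const_mul (4 / κ ^ 3)).deriv
  -- explicit matrices
  have hJlamA : Jlam = !![ -(1 / (2 * κ ^ 2 * (c₁ - κ ^ 2) ^ 2)) - 2 / ((c₁ - κ ^ 2) ^ 2 * (c₂ - κ ^ 2)),
      -(1 / (2 * κ ^ 2 * (c₂ - κ ^ 2) ^ 2)) - 2 / ((c₁ - κ ^ 2) * (c₂ - κ ^ 2) ^ 2);
      1 / (c₁ - κ ^ 2) ^ 2, 1 / (c₂ - κ ^ 2) ^ 2] := by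
    rw [show Jlam = !![deriv (fun c => l₁ c c₂) c₁, deriv (fun c => l₁ c₁ c) c₂;
        deriv (fun c => l₂ c c₂) c₁, deriv (fun c => l₂ c₁ c) c₂] from rfl,
      hL11, hL12, hL21, hL22]
  have hJFB : JF = !![(8 / κ) * (Real.sqrt (c₁ - 3 * κ ^ 2) / (2 * (c₁ - κ ^ 2) * Real.sqrt (c₁ - κ ^ 2))),
      (8 / κ) * (Real.sqrt (c₂ - 3 * κ ^ 2) / (2 * (c₂ - κ ^ 2) * Real.sqrt (c₂ - κ ^ 2)));
      (4 / κ ^ 3) * ((c₁ + 3 * κ ^ 2) * Real.sqrt (c₁ - 3 * κ ^ 2)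
          / (2 * (c₁ - κ ^ 2) ^ 2 * Real.sqrt (c₁ - κ ^ 2))),
      (4 / κ ^ 3) * ((c₂ + 3 * κ ^ 2) * Real.sqrt (c₂ - 3 * κ ^ 2)
          / (2 * (c₂ - κ ^ 2) ^ 2 * Real.sqrt (c₂ - κ ^ 2)))] := by
    rw [show JF = !![deriv (fun c => F₁ c c₂) c₁, deriv (fun c => F₁ c₁ c) c₂;
        deriv (fun c => F₂ c c₂) c₁, deriv (fun c => F₂ c₁ c) c₂] from rfl,
      hJ11, hJ12, hJ21, hJ22]
  have hsa1 := Real.sqrt_pos.mpr ha1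
  have hsa2 := Real.sqrt_pos.mpr ha2
  have hsb1 := Real.sqrt_pos.mpr hb1
  have hsb2 := Real.sqrt_pos.mpr hb2
  have hdetA : Jlam.det = 2 * ((c₂ - κ ^ 2) - (c₁ - κ ^ 2))
      / ((c₁ - κ ^ 2) ^ 3 * (c₂ - κ ^ 2) ^ 3) := by
    rw [hJlamA, Matrix.det_fin_two_of]
    field_simp
    ring
  have hdetAneg : Jlam.det < 0 := by
    rw [hdetA]
    apply div_neg_of_neg_of_pos
    · nlinarith
    · positivity
  have hdetB : JF.det = 32 * (c₁ - c₂) * Real.sqrt (c₁ - 3 * κ ^ 2) * Real.sqrt (c₂ - 3 * κ ^ 2)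
      / (κ ^ 2 * Real.sqrt (c₁ - κ ^ 2) * Real.sqrt (c₂ - κ ^ 2)
        * ((c₁ - κ ^ 2) * (c₂ - κ ^ 2)) ^ 2) := by
    rw [hJFB, Matrix.det_fin_two_of]
    field_simp
    ring
  have hsqrt : Real.sqrt ((c₁ - κ ^ 2) * (c₂ - κ ^ 2) * (c₁ - 3 * κ ^ 2) * (c₂ - 3 * κ ^ 2))
      = Real.sqrt (c₁ - κ ^ 2) * Real.sqrt (c₂ - κ ^ 2) * Real.sqrt (c₁ - 3 * κ ^ 2)
        * Real.sqrt (c₂ - 3 * κ ^ 2) := by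
    rw [Real.sqrt_mul (by positivity), Real.sqrt_mul (by positivity), Real.sqrt_mul ha1.le]
  have hMdet : M.det = -(16 / κ ^ 2)
      * Real.sqrt ((c₁ - κ ^ 2) * (c₂ - κ ^ 2) * (c₁ - 3 * κ ^ 2) * (c₂ - 3 * κ ^ 2)) := by
    rw [show M = JF * Jlam⁻¹ from rfl, Matrix.det_mul, Matrix.det_nonsing_inv, Ring.inverse_eq_inv', hdetA, hdetB,
      hsqrt]
    have hq1 : Real.sqrt (c₁ - κ ^ 2) ^ 2 = c₁ - κ ^ 2 := Real.sq_sqrt ha1.le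
    have hq2 : Real.sqrt (c₂ - κ ^ 2) ^ 2 = c₂ - κ ^ 2 := Real.sq_sqrt ha2.le
    have hlt : Real.sqrt (c₂ - κ ^ 2) < Real.sqrt (c₁ - κ ^ 2) :=
      Real.sqrt_lt_sqrt ha2.le (by linarith)
    have hp1 := hsa1; have hp2 := hsa2; have hp3 := hsb1; have hp4 := hsb2
    generalize hga1 : Real.sqrt (c₁ - κ ^ 2) = sa₁
    generalize hga2 : Real.sqrt (c₂ - κ ^ 2) = sa₂
    generalize hgb1 : Real.sqrt (c₁ - 3 * κ ^ 2) = sb₁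
    generalize hgb2 : Real.sqrt (c₂ - 3 * κ ^ 2) = sb₂
    rw [hga1] at hq1 hlt hp1
    rw [hga2] at hq2 hlt hp2
    rw [hgb1] at hp3
    rw [hgb2] at hp4
    rw [show c₁ - c₂ = sa₁ ^ 2 - sa₂ ^ 2 by rw [hq1, hq2]; ring, ← hq1, ← hq2]
    have hne : sa₂ ^ 2 - sa₁ ^ 2 ≠ 0 := by nlinarith
    have hu : sa₁ ^ 5 * sa₂ ^ 7 * κ ^ 2 * 2 - sa₁ ^ 7 * sa₂ ^ 5 * κ ^ 2 * 2 ≠ 0 := by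
      have hfac : sa₁ ^ 5 * sa₂ ^ 7 * κ ^ 2 * 2 - sa₁ ^ 7 * sa₂ ^ 5 * κ ^ 2 * 2
          = sa₁ ^ 5 * sa₂ ^ 5 * κ ^ 2 * 2 * (sa₂ ^ 2 - sa₁ ^ 2) := by ring
      rw [hfac]
      exact mul_ne_zero (by positivity) hne
    field_simp [hu]
    ring
  have hMneg : M.det < 0 := by
    rw [hMdet]
    have hp : 0 < Real.sqrt ((c₁ - κ ^ 2) * (c₂ - κ ^ 2) * (c₁ - 3 * κ ^ 2) * (c₂ - 3 * κ ^ 2)) :=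
      Real.sqrt_pos.mpr (by positivity)
    have h16 : (0:ℝ) < 16 / κ ^ 2 := by positivity
    nlinarith
  exact ⟨isUnit_iff_ne_zero.mpr hdetAneg.ne, hMdet, hMneg, eig_of_det_neg M hMneg⟩
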